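/- Let E be a finite-dimensional real vector space and π₀ : E* → E a skew-symmetric linear map. Define V = { (λ,φ) ∈ W(E) : λ(u) = λ(0) − π₀(∫₀ᵘ φ(s) ds) for all u ∈ [0,1] }. Then V^⊥ ⊆ V; that is, V is a coisotropic subspace of (W(E), Ω). -/

import Mathlib

open MeasureTheory Set

/-- An element of `W(E)`: a pair `(λ, φ)` of continuous maps on `[0,1]` with values in `E`
and in the dual `E* = E →L[ℝ] ℝ` respectively. -/
structure WPair (E : Type*) [NormedAddCommGroup E] [NormedSpace ℝ E] where
  lam : ℝ → E
  phi : ℝ → E →L[ℝ] ℝ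
  lam_cont : ContinuousOn lam (Icc 0 1)
  phi_cont : ContinuousOn phi (Icc 0 1)

/-- The alternating bilinear form `Ω((λ,φ),(λ',φ')) = ∫₀¹ (φ(u)(λ'(u)) − φ'(u)(λ(u))) du`. -/
noncomputable def Omega {E : Type*} [NormedAddCommGroup E] [NormedSpace ℝ E]
    (w w' : WPair E) : ℝ :=
  ∫ u in (0:ℝ)..(1:ℝ), (w.phi u (w'.lam u) - w'.phi u (w.lam u))

/-- The `Ω`-orthogonal of a subset of `W(E)`. -/
def orth {E : Type*} [NormedAddCommGroup E] [NormedSpace ℝ E] (A : Set (WPair E)) :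
    Set (WPair E) :=
  {w | ∀ a ∈ A, Omega a w = 0}

section Aux

/-- FTC helper: primitive of a continuous function is differentiable. -/
lemma primitive_hasDerivAt {F : Type*} [NormedAddCommGroup F] [NormedSpace ℝ F]
    [CompleteSpace F] {f : ℝ → F} (hf : Continuous f) (t : ℝ) :
    HasDerivAt (fun u => ∫ s in (0:ℝ)..u, f s) (f t) t :=
  intervalIntegral.integral_hasDerivAt_right (hf.intervalIntegrable _ _)
    hf.stronglyMeasurable.stronglyMeasurableAtFilter hf.continuousAt

/-- A continuous nonnegative function with zero integral vanishes on `[0,1]`. -/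
lemma eq_zero_of_integral_zero {f : ℝ → ℝ} (hf : Continuous f)
    (hnn : ∀ u, 0 ≤ f u) (hint : ∫ u in (0:ℝ)..1, f u = 0) :
    ∀ u ∈ Icc (0:ℝ) 1, f u = 0 := by
  set F : ℝ → ℝ := fun t => ∫ u in (0:ℝ)..t, f u with hFdef
  have hFderiv : ∀ t : ℝ, HasDerivAt F (f t) t := fun t => primitive_hasDerivAt hf t
  have hFzero : ∀ t ∈ Icc (0:ℝ) 1, F t = 0 := by
    intro t ht
    have h1 : 0 ≤ F t := intervalIntegral.integral_nonneg ht.1 fun u _ => hnn u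
    have hsplit : F t + ∫ u in t..1, f u = F 1 :=
      intervalIntegral.integral_add_adjacent_intervals (hf.intervalIntegrable _ _)
        (hf.intervalIntegrable _ _)
    have h3 : 0 ≤ ∫ u in t..1, f u := intervalIntegral.integral_nonneg ht.2 fun u _ => hnn u
    have hF1 : F 1 = 0 := hint
    linarith
  have hIoo : EqOn f (fun _ => (0:ℝ)) (Ioo (0:ℝ) 1) := by
    intro t ht
    have h0 : HasDerivAt F 0 t := by
      have hev : F =ᶠ[nhds t] fun _ => (0:ℝ) := by
        filter_upwards [Ioo_mem_nhds ht.1 ht.2] with x hx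
        exact hFzero x (Ioo_subset_Icc_self hx)
      exact (hasDerivAt_const t (0:ℝ)).congr_of_eventuallyEq hev
    exact (hFderiv t).unique h0
  have hcl : EqOn f (fun _ => (0:ℝ)) (closure (Ioo (0:ℝ) 1)) :=
    hIoo.closure hf continuous_const
  intro u hu
  exact hcl (by rw [closure_Ioo one_ne_zero.symm]; exact hu)

end Aux

theorem coisotropic_of_skew
    (E : Type*) [NormedAddCommGroup E] [NormedSpace ℝ E] [FiniteDimensional ℝ E]
    (π₀ : (E →L[ℝ] ℝ) →ₗ[ℝ] E)
    (hskew : ∀ α β : E →L[ℝ] ℝ, α (π₀ β) = - β (π₀ α)) :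
    orth {w : WPair E |
        ∀ u ∈ Icc (0:ℝ) 1, w.lam u = w.lam 0 - π₀ (∫ s in (0:ℝ)..u, w.phi s)} ⊆
      {w : WPair E |
        ∀ u ∈ Icc (0:ℝ) 1, w.lam u = w.lam 0 - π₀ (∫ s in (0:ℝ)..u, w.phi s)} := by
  intro w hw
  -- clamping map
  set c : ℝ → ℝ := fun u => max 0 (min 1 u) with hcdef
  have hc_cont : Continuous c := continuous_const.max (continuous_const.min continuous_id)
  have hc_mem : ∀ u, c u ∈ Icc (0:ℝ) 1 := fun u =>
    ⟨le_max_left _ _, max_le zero_le_one (min_le_left _ _)⟩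
  have hc_eq : ∀ u ∈ Icc (0:ℝ) 1, c u = u := by
    intro u hu
    simp [hcdef, min_eq_right hu.2, max_eq_right hu.1]
  -- continuous extensions of w.lam and w.phi
  set lamh : ℝ → E := fun u => w.lam (c u) with hlamh
  set phih : ℝ → E →L[ℝ] ℝ := fun u => w.phi (c u) with hphih
  have hlam_cont : Continuous lamh := w.lam_cont.comp_continuous hc_cont hc_mem
  have hphi_cont : Continuous phih := w.phi_cont.comp_continuous hc_cont hc_mem
  have hlam_eq : ∀ u ∈ Icc (0:ℝ) 1, lamh u = w.lam u := fun u hu => by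
    rw [hlamh]; simp only []; rw [hc_eq u hu]
  have hphi_eq : ∀ u ∈ Icc (0:ℝ) 1, phih u = w.phi u := fun u hu => by
    rw [hphih]; simp only []; rw [hc_eq u hu]
  -- π₀ as a continuous linear map
  set πC : (E →L[ℝ] ℝ) →L[ℝ] E := LinearMap.toContinuousLinearMap π₀ with hπC
  have hπ : ∀ β, πC β = π₀ β := fun β => rfl
  -- the primitive of phih
  set Ψ : ℝ → E →L[ℝ] ℝ := fun u => ∫ s in (0:ℝ)..u, phih s with hΨdef
  have hΨd : ∀ t, HasDerivAt Ψ (phih t) t := fun t => primitive_hasDerivAt hphi_cont t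
  have hΨc : Continuous Ψ := continuous_iff_continuousAt.2 fun t => (hΨd t).continuousAt
  have hΨ0 : Ψ 0 = 0 := intervalIntegral.integral_same
  have hΨeq : ∀ u ∈ Icc (0:ℝ) 1, Ψ u = ∫ s in (0:ℝ)..u, w.phi s := by
    intro u hu
    apply intervalIntegral.integral_congr
    intro s hs
    rw [uIcc_of_le hu.1] at hs
    exact hphi_eq s ⟨hs.1, hs.2.trans hu.2⟩
  have cΨ : Continuous fun u => πC (Ψ u) := πC.continuous.comp hΨc
  have cφ : Continuous fun u => πC (phih u) := πC.continuous.comp hphi_cont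
  -- Step A : Ψ 1 = 0
  have hΨ1 : Ψ 1 = 0 := by
    have hx : ∀ x : E, ∫ u in (0:ℝ)..1, w.phi u x = 0 := by
      intro x
      have hmem : (⟨fun _ => x, fun _ => 0, continuousOn_const, continuousOn_const⟩ : WPair E) ∈
          {w : WPair E | ∀ u ∈ Icc (0:ℝ) 1,
            w.lam u = w.lam 0 - π₀ (∫ s in (0:ℝ)..u, w.phi s)} := by
        intro u hu
        simp
      have h0 := hw _ hmem
      simp only [Omega, ContinuousLinearMap.zero_apply, zero_sub,
        intervalIntegral.integral_neg, neg_eq_zero] at h0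
      exact h0
    ext x
    have h1 : Ψ 1 x = ∫ u in (0:ℝ)..1, phih u x :=
      ContinuousLinearMap.intervalIntegral_apply (hphi_cont.intervalIntegrable _ _) x
    have h2 : (∫ u in (0:ℝ)..1, phih u x) = ∫ u in (0:ℝ)..1, w.phi u x := by
      apply intervalIntegral.integral_congr
      intro s hs
      rw [uIcc_of_le zero_le_one] at hs
      show phih s x = w.phi s x
      rw [hphi_eq s hs]
    rw [ContinuousLinearMap.zero_apply, h1, h2, hx x]
  -- Step B : key identity
  set g : ℝ → E := fun u => lamh u + πC (Ψ u) with hgdef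
  have hg_cont : Continuous g := hlam_cont.add cΨ
  have key : ∀ ψ : ℝ → E →L[ℝ] ℝ, Continuous ψ →
      ∫ u in (0:ℝ)..1, ψ u (g u) = 0 := by
    intro ψ hψ
    set Φ : ℝ → E →L[ℝ] ℝ := fun u => ∫ s in (0:ℝ)..u, ψ s with hΦdef
    have hΦd : ∀ t, HasDerivAt Φ (ψ t) t := fun t => primitive_hasDerivAt hψ t
    have hΦc : Continuous Φ := continuous_iff_continuousAt.2 fun t => (hΦd t).continuousAt
    have hΦ0 : Φ 0 = 0 := intervalIntegral.integral_same
    have cΦπ : Continuous fun u => πC (Φ u) := πC.continuous.comp hΦc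
    -- the test element of V
    set a : WPair E := ⟨fun u => -(πC (Φ u)), ψ,
      cΦπ.neg.continuousOn, hψ.continuousOn⟩ with hadef
    have hamem : a ∈ {w : WPair E | ∀ u ∈ Icc (0:ℝ) 1,
        w.lam u = w.lam 0 - π₀ (∫ s in (0:ℝ)..u, w.phi s)} := by
      intro u hu
      show -(πC (Φ u)) = -(πC (Φ 0)) - π₀ (∫ s in (0:ℝ)..u, ψ s)
      rw [hΦ0, map_zero, neg_zero, zero_sub, hπ]
    have hOm := hw a hamem
    -- rewrite Omega a w using the extensions and skew-symmetry
    have h1 : ∫ u in (0:ℝ)..1, (ψ u (lamh u) - Φ u (πC (phih u))) = 0 := by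
      have hcong : ∫ u in (0:ℝ)..1, (ψ u (lamh u) - Φ u (πC (phih u))) = Omega a w := by
        apply intervalIntegral.integral_congr
        intro u hu
        rw [uIcc_of_le zero_le_one] at hu
        show ψ u (lamh u) - Φ u (πC (phih u)) = a.phi u (w.lam u) - w.phi u (a.lam u)
        have e1 : a.phi u = ψ u := rfl
        have e2 : a.lam u = -(πC (Φ u)) := rfl
        rw [e1, e2, ← hlam_eq u hu, ← hphi_eq u hu, map_neg, sub_neg_eq_add, hπ, hπ,
          hskew (phih u) (Φ u)]
        ring
      exact hcong.trans hOm
    -- integration by parts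
    have h2 : ∫ u in (0:ℝ)..1, (ψ u (πC (Ψ u)) + Φ u (πC (phih u))) = 0 := by
      have hFd : ∀ u : ℝ, HasDerivAt (fun t => Φ t (πC (Ψ t)))
          (ψ u (πC (Ψ u)) + Φ u (πC (phih u))) u := by
        intro u
        have hinner : HasDerivAt (fun t => πC (Ψ t)) (πC (phih u)) u :=
          πC.hasFDerivAt.comp_hasDerivAt u (hΨd u)
        exact (hΦd u).clm_apply hinner
      have hcont : Continuous fun u => ψ u (πC (Ψ u)) + Φ u (πC (phih u)) :=
        (hψ.clm_apply cΨ).add (hΦc.clm_apply cφ)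
      rw [intervalIntegral.integral_eq_sub_of_hasDerivAt (fun u _ => hFd u)
        (hcont.intervalIntegrable _ _)]
      rw [hΨ1, map_zero, map_zero, hΦ0, ContinuousLinearMap.zero_apply, sub_zero]
    -- combine
    have cA : Continuous fun u => ψ u (lamh u) - Φ u (πC (phih u)) :=
      (hψ.clm_apply hlam_cont).sub (hΦc.clm_apply cφ)
    have cB : Continuous fun u => ψ u (πC (Ψ u)) + Φ u (πC (phih u)) :=
      (hψ.clm_apply cΨ).add (hΦc.clm_apply cφ)
    have hsplit : ∫ u in (0:ℝ)..1, ψ u (g u) =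
        (∫ u in (0:ℝ)..1, (ψ u (lamh u) - Φ u (πC (phih u)))) +
        ∫ u in (0:ℝ)..1, (ψ u (πC (Ψ u)) + Φ u (πC (phih u))) := by
      rw [← intervalIntegral.integral_add (cA.intervalIntegrable _ _)
        (cB.intervalIntegrable _ _)]
      apply intervalIntegral.integral_congr
      intro u hu
      show ψ u (g u) = _
      simp only [hgdef, map_add]
      ring
    rw [hsplit, h1, h2, add_zero]
  -- Step C : conclude g = 0 on [0,1]
  set T := toEuclidean (E := E) with hTdef
  have hg0 : ∀ u ∈ Icc (0:ℝ) 1, g u = 0 := by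
    set ψ : ℝ → E →L[ℝ] ℝ := fun u =>
      ((innerSL ℝ (T (g u))).comp (T : E →L[ℝ] _)) with hψdef
    have hψc : Continuous ψ := by
      apply Continuous.clm_comp _ continuous_const
      exact (innerSL ℝ).continuous.comp (T.continuous.comp hg_cont)
    have hval : ∀ u, ψ u (g u) = ‖T (g u)‖ ^ 2 := by
      intro u
      rw [hψdef]
      simp only [ContinuousLinearMap.comp_apply, innerSL_apply_apply, ContinuousLinearEquiv.coe_coe]
      exact real_inner_self_eq_norm_sq _
    have hint : ∫ u in (0:ℝ)..1, ‖T (g u)‖ ^ 2 = 0 := by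
      have hcong : ∫ u in (0:ℝ)..1, ‖T (g u)‖ ^ 2 = ∫ u in (0:ℝ)..1, ψ u (g u) :=
        intervalIntegral.integral_congr fun u _ => (hval u).symm
      exact hcong.trans (key ψ hψc)
    have hz := eq_zero_of_integral_zero
      (((T.continuous.comp hg_cont).norm).pow 2) (fun u => by exact sq_nonneg _) hint
    intro u hu
    have hn : ‖T (g u)‖ ^ 2 = 0 := hz u hu
    have hT0 : T (g u) = 0 := by
      have := pow_eq_zero_iff (n := 2) (by norm_num) |>.1 hn
      simpa using this
    exact (ContinuousLinearEquiv.map_eq_zero_iff T).1 hT0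
  -- final conclusion
  intro u hu
  have hu0 : (0:ℝ) ∈ Icc (0:ℝ) 1 := ⟨le_refl _, zero_le_one⟩
  have hlu : w.lam u = -(πC (Ψ u)) := by
    have h := hg0 u hu
    simp only [hgdef] at h
    rw [← hlam_eq u hu]
    exact eq_neg_of_add_eq_zero_left h
  have hl0 : w.lam 0 = 0 := by
    have h := hg0 0 hu0
    simp only [hgdef, hΨ0, map_zero, add_zero] at h
    rw [← hlam_eq 0 hu0]
    exact h
  rw [hlu, hl0, ← hΨeq u hu, ← hπ, zero_sub]
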